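/- Let u₀ ∈ L¹(ℝ^N) with M = ∫_{ℝ^N} u₀(x) dx, and for t > 0 let u(x,t) = ∫_{ℝ^N} G(x-y,t) u₀(y) dy. Then the L¹ distance to the multiple of the heat kernel with the same mass tends to zero: lim_{t→∞} ∫_{ℝ^N} |u(x,t) - M·G(x,t)| dx = 0. -/

import Mathlib

open MeasureTheory Real Filter Topology Set

noncomputable section

/-- The Gaussian heat kernel on `ℝ^N`:
`G(x,t) = (4πt)^{-N/2} exp(-|x|²/(4t))`. -/
def heatKernel (N : ℕ) (x : EuclideanSpace ℝ (Fin N)) (t : ℝ) : ℝ :=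
  (4 * π * t) ^ (-(N : ℝ) / 2) * Real.exp (-‖x‖ ^ 2 / (4 * t))

namespace HeatAsymptotics

lemma hk_nonneg (N : ℕ) (x : EuclideanSpace ℝ (Fin N)) {t : ℝ} (ht : 0 < t) :
    0 ≤ heatKernel N x t := by
  unfold heatKernel; have := Real.pi_pos; positivity

lemma integrable_gauss (N : ℕ) {b : ℝ} (hb : 0 < b) :
    Integrable (fun x : EuclideanSpace ℝ (Fin N) => rexp (-b * ‖x‖^2)) := by
  have h := (GaussianFourier.integrable_cexp_neg_mul_sq_norm_add
    (V := EuclideanSpace ℝ (Fin N)) (b := (b:ℂ)) (by simpa using hb) 0 0).norm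
  refine h.congr (Eventually.of_forall fun v => ?_)
  simp [Complex.norm_exp, ← Complex.ofReal_pow]

lemma hk_integrable (N : ℕ) {t : ℝ} (ht : 0 < t) :
    Integrable (fun x : EuclideanSpace ℝ (Fin N) => heatKernel N x t) := by
  have h : Integrable (fun x : EuclideanSpace ℝ (Fin N) => rexp (-(1/(4*t)) * ‖x‖^2)) :=
    integrable_gauss N (by positivity)
  refine (h.const_mul ((4 * π * t) ^ (-(N:ℝ)/2))).congr (Eventually.of_forall fun v => ?_)
  unfold heatKernel
  ring_nf

lemma hk_integral (N : ℕ) {t : ℝ} (ht : 0 < t) :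
    ∫ x : EuclideanSpace ℝ (Fin N), heatKernel N x t = 1 := by
  unfold heatKernel
  rw [integral_const_mul]
  have h : ∀ x : EuclideanSpace ℝ (Fin N), rexp (-‖x‖^2/(4*t)) = rexp (-(1/(4*t)) * ‖x‖^2) := by
    intro x; ring_nf
  simp_rw [h]
  rw [GaussianFourier.integral_rexp_neg_mul_sq_norm (by positivity)]
  rw [finrank_euclideanSpace_fin]
  have h4 : (0:ℝ) < 4 * π * t := by have := Real.pi_pos; positivity
  have heq : π / (1/(4*t)) = 4 * π * t := by field_simp
  rw [heq, neg_div, Real.rpow_neg h4.le, inv_mul_cancel₀]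
  exact (Real.rpow_pos_of_pos h4 _).ne'

lemma hk_cont (N : ℕ) (t : ℝ) :
    Continuous (fun x : EuclideanSpace ℝ (Fin N) => heatKernel N x t) := by
  unfold heatKernel; fun_prop

lemma hk_scaling (N : ℕ) {t : ℝ} (ht : 0 < t) (x : EuclideanSpace ℝ (Fin N)) :
    heatKernel N x t = t ^ (-(N:ℝ)/2) * heatKernel N ((Real.sqrt t)⁻¹ • x) 1 := by
  have hst : 0 < Real.sqrt t := Real.sqrt_pos.mpr ht
  unfold heatKernel
  have hn : ‖(Real.sqrt t)⁻¹ • x‖ = (Real.sqrt t)⁻¹ * ‖x‖ := by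
    rw [norm_smul]; simp [abs_of_pos (inv_pos.mpr hst)]
  rw [hn]
  have hsq : ((Real.sqrt t)⁻¹ * ‖x‖)^2 = ‖x‖^2 / t := by
    rw [mul_pow, inv_pow, Real.sq_sqrt ht.le]; ring
  rw [hsq]
  have hc : (4 * π * t) ^ (-(N:ℝ)/2) = t ^ (-(N:ℝ)/2) * (4 * π * 1) ^ (-(N:ℝ)/2) := by
    rw [mul_one, ← Real.mul_rpow (by positivity) (by have := Real.pi_pos; positivity)]
    ring_nf
  rw [hc]
  have he : -‖x‖^2/(4*t) = -(‖x‖^2/t)/(4*1) := by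
    rw [mul_one, neg_div, neg_div, div_div, mul_comm]
  rw [he]; ring

lemma sqrt_pow_N (N : ℕ) {t : ℝ} (ht : 0 < t) :
    t ^ (-(N:ℝ)/2) * (Real.sqrt t) ^ N = 1 := by
  rw [← Real.rpow_natCast (Real.sqrt t) N, Real.sqrt_eq_rpow,
    ← Real.rpow_mul ht.le, ← Real.rpow_add ht]
  rw [show -(N:ℝ)/2 + 1/2 * (N:ℝ) = 0 by ring, Real.rpow_zero]

lemma phi_eq (N : ℕ) {t : ℝ} (ht : 0 < t) (y : EuclideanSpace ℝ (Fin N)) :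
    ∫ x : EuclideanSpace ℝ (Fin N), |heatKernel N (x - y) t - heatKernel N x t|
      = ∫ z : EuclideanSpace ℝ (Fin N),
          |heatKernel N (z - (Real.sqrt t)⁻¹ • y) 1 - heatKernel N z 1| := by
  have hst : 0 < Real.sqrt t := Real.sqrt_pos.mpr ht
  have htp : 0 < t ^ (-(N:ℝ)/2) := Real.rpow_pos_of_pos ht _
  have key : ∀ x : EuclideanSpace ℝ (Fin N),
      |heatKernel N (x - y) t - heatKernel N x t|
        = t ^ (-(N:ℝ)/2) * |heatKernel N ((Real.sqrt t)⁻¹ • x - (Real.sqrt t)⁻¹ • y) 1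
            - heatKernel N ((Real.sqrt t)⁻¹ • x) 1| := by
    intro x
    rw [hk_scaling N ht (x - y), hk_scaling N ht x, smul_sub, ← mul_sub, abs_mul,
      abs_of_pos htp]
  simp_rw [key]
  rw [integral_const_mul]
  have := Measure.integral_comp_inv_smul (volume : Measure (EuclideanSpace ℝ (Fin N)))
    (fun z => |heatKernel N (z - (Real.sqrt t)⁻¹ • y) 1 - heatKernel N z 1|) (Real.sqrt t)
  simp only [smul_eq_mul] at this
  rw [this, finrank_euclideanSpace_fin, abs_of_pos (pow_pos hst N), ← mul_assoc,
    sqrt_pow_N N ht, one_mul]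

lemma hk_dom (N : ℕ) (z a : EuclideanSpace ℝ (Fin N)) (ha : ‖a‖ ≤ 1) :
    heatKernel N (z - a) 1 ≤
      (4 * π * 1) ^ (-(N:ℝ)/2) * Real.exp 1 * rexp (-(1/8) * ‖z‖^2) := by
  unfold heatKernel
  have hC : (0:ℝ) ≤ (4 * π * 1) ^ (-(N:ℝ)/2) := by
    have := Real.pi_pos; positivity
  have hexp : rexp (-‖z - a‖^2/(4*1)) ≤ rexp 1 * rexp (-(1/8) * ‖z‖^2) := by
    rw [← Real.exp_add]
    apply Real.exp_le_exp.mpr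
    have h1 : ‖z‖ ≤ ‖z - a‖ + 1 := by
      calc ‖z‖ = ‖(z - a) + a‖ := by rw [sub_add_cancel]
      _ ≤ ‖z - a‖ + ‖a‖ := norm_add_le _ _
      _ ≤ ‖z - a‖ + 1 := by linarith
    have h3 : ‖z‖^2 ≤ (‖z - a‖ + 1)^2 := pow_le_pow_left₀ (norm_nonneg z) h1 2
    have h2 : ‖z‖^2/2 - 1 ≤ ‖z - a‖^2 := by nlinarith [sq_nonneg (‖z - a‖ - 1)]
    nlinarith
  calc (4 * π * 1) ^ (-(N:ℝ)/2) * rexp (-‖z - a‖^2/(4*1))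
      ≤ (4 * π * 1) ^ (-(N:ℝ)/2) * (rexp 1 * rexp (-(1/8) * ‖z‖^2)) :=
        mul_le_mul_of_nonneg_left hexp hC
    _ = (4 * π * 1) ^ (-(N:ℝ)/2) * rexp 1 * rexp (-(1/8) * ‖z‖^2) := by ring

lemma tendsto_translate (N : ℕ) :
    Tendsto (fun a : EuclideanSpace ℝ (Fin N) =>
        ∫ z, |heatKernel N (z - a) 1 - heatKernel N z 1|) (𝓝 0) (𝓝 0) := by
  have hcont := hk_cont N 1
  set C := (4 * π * 1 : ℝ) ^ (-(N:ℝ)/2) with hCdef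
  have hC : (0:ℝ) ≤ C := by rw [hCdef]; have := Real.pi_pos; positivity
  have hbi : Integrable (fun z : EuclideanSpace ℝ (Fin N) =>
      2 * (C * Real.exp 1) * rexp (-(1/8) * ‖z‖^2)) :=
    (integrable_gauss N (by norm_num)).const_mul _
  have key := tendsto_integral_filter_of_dominated_convergence
    (μ := (volume : Measure (EuclideanSpace ℝ (Fin N)))) (l := 𝓝 (0 : EuclideanSpace ℝ (Fin N)))
    (F := fun a z => |heatKernel N (z - a) 1 - heatKernel N z 1|)
    (f := fun _ => (0:ℝ))
    (fun z => 2 * (C * Real.exp 1) * rexp (-(1/8) * ‖z‖^2))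
    (Eventually.of_forall fun a =>
      (((hcont.comp (continuous_id.sub continuous_const)).sub hcont).abs).aestronglyMeasurable)
    ?_ hbi ?_
  · simpa using key
  · refine eventually_of_mem (Metric.ball_mem_nhds (0 : EuclideanSpace ℝ (Fin N)) one_pos) ?_
    intro a ha
    have ha1 : ‖a‖ ≤ 1 := by
      simpa [dist_eq_norm] using (Metric.mem_ball.mp ha).le
    refine Eventually.of_forall fun z => ?_
    rw [Real.norm_eq_abs, abs_abs]
    have h1 := hk_dom N z a ha1
    have h2 := hk_dom N z 0 (by simp)
    rw [sub_zero] at h2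
    have hn1 := hk_nonneg N (z - a) one_pos
    have hn2 := hk_nonneg N z one_pos
    calc |heatKernel N (z - a) 1 - heatKernel N z 1|
        ≤ |heatKernel N (z - a) 1| + |heatKernel N z 1| := abs_sub _ _
      _ = heatKernel N (z - a) 1 + heatKernel N z 1 := by
          rw [abs_of_nonneg hn1, abs_of_nonneg hn2]
      _ ≤ 2 * (C * Real.exp 1) * rexp (-(1/8) * ‖z‖^2) := by
          simp only [← hCdef] at h1 h2
          nlinarith [Real.exp_pos (-(1/8) * ‖z‖^2), Real.exp_pos (1:ℝ)]
  · refine Eventually.of_forall fun z => ?_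
    have hc : Continuous fun a : EuclideanSpace ℝ (Fin N) =>
        |heatKernel N (z - a) 1 - heatKernel N z 1| :=
      ((hcont.comp (continuous_const.sub continuous_id)).sub continuous_const).abs
    have := hc.tendsto 0
    simpa using this

lemma phi_le_two (N : ℕ) {t : ℝ} (ht : 0 < t) (y : EuclideanSpace ℝ (Fin N)) :
    ∫ x : EuclideanSpace ℝ (Fin N), |heatKernel N (x - y) t - heatKernel N x t| ≤ 2 := by
  have hi2 := hk_integrable N ht
  have hi1 : Integrable (fun x : EuclideanSpace ℝ (Fin N) => heatKernel N (x - y) t) :=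
    hi2.comp_sub_right y
  calc ∫ x, |heatKernel N (x - y) t - heatKernel N x t|
      ≤ ∫ x, (heatKernel N (x - y) t + heatKernel N x t) := by
        refine integral_mono_of_nonneg (Eventually.of_forall fun x => abs_nonneg _)
          (hi1.add hi2) (Eventually.of_forall fun x => ?_)
        have hn1 := hk_nonneg N (x - y) ht
        have hn2 := hk_nonneg N x ht
        calc |heatKernel N (x - y) t - heatKernel N x t|
            ≤ |heatKernel N (x - y) t| + |heatKernel N x t| := abs_sub _ _
          _ = _ := by rw [abs_of_nonneg hn1, abs_of_nonneg hn2]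
    _ = 2 := by
        rw [integral_add hi1 hi2,
          integral_sub_right_eq_self (fun x => heatKernel N x t) y, hk_integral N ht]
        norm_num

lemma phi_nonneg (N : ℕ) (t : ℝ) (y : EuclideanSpace ℝ (Fin N)) :
    0 ≤ ∫ x : EuclideanSpace ℝ (Fin N), |heatKernel N (x - y) t - heatKernel N x t| :=
  integral_nonneg fun _ => abs_nonneg _

end HeatAsymptotics

open HeatAsymptotics

/-- Intermediate asymptotics for the heat equation: if `u₀ ∈ L¹(ℝ^N)` has mass `M`,
then the solution `u(·,t) = G(·,t) ⋆ u₀` satisfies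
`‖u(·,t) - M G(·,t)‖_{L¹} → 0` as `t → ∞`. -/
theorem heat_equation_intermediate_asymptotics (N : ℕ) (hN : 1 ≤ N)
    (u₀ : EuclideanSpace ℝ (Fin N) → ℝ) (hu₀ : Integrable u₀)
    (M : ℝ) (hM : M = ∫ x, u₀ x) :
    Tendsto (fun t : ℝ =>
        ∫ x, |(∫ y, heatKernel N (x - y) t * u₀ y) - M * heatKernel N x t|)
      atTop (𝓝 0) := by
  have habs : AEStronglyMeasurable (fun y : EuclideanSpace ℝ (Fin N) => |u₀ y|) volume := by
    simpa [Real.norm_eq_abs] using hu₀.aestronglyMeasurable.norm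
  -- The dominating upper bound
  set B : ℝ → ℝ := fun t =>
    ∫ y, (∫ x, |heatKernel N (x - y) t - heatKernel N x t|) * |u₀ y| with hBdef
  -- Step B : B tends to 0
  have hB : Tendsto B atTop (𝓝 0) := by
    have key := tendsto_integral_filter_of_dominated_convergence
      (μ := (volume : Measure (EuclideanSpace ℝ (Fin N)))) (l := (atTop : Filter ℝ))
      (F := fun t y => (∫ x, |heatKernel N (x - y) t - heatKernel N x t|) * |u₀ y|)
      (f := fun _ => (0:ℝ)) (fun y => 2 * |u₀ y|)
      ?_ ?_ ?_ ?_
    · simpa using key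
    · -- measurability
      refine Eventually.of_forall fun t => ?_
      have hcont : Continuous (Function.uncurry fun (y x : EuclideanSpace ℝ (Fin N)) =>
          |heatKernel N (x - y) t - heatKernel N x t|) := by
        apply Continuous.abs
        exact ((hk_cont N t).comp (continuous_snd.sub continuous_fst)).sub
          ((hk_cont N t).comp continuous_snd)
      exact (hcont.stronglyMeasurable.integral_prod_right).aestronglyMeasurable.mul habs
    · -- bound
      filter_upwards [eventually_gt_atTop (0:ℝ)] with t ht
      refine Eventually.of_forall fun y => ?_
      rw [Real.norm_eq_abs, abs_of_nonneg (mul_nonneg (phi_nonneg N t y) (abs_nonneg _))]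
      exact mul_le_mul_of_nonneg_right (phi_le_two N ht y) (abs_nonneg _)
    · -- integrability of the bound
      have := hu₀.norm.const_mul 2
      simpa [Real.norm_eq_abs] using this
    · -- pointwise limit
      refine Eventually.of_forall fun y => ?_
      have h1 : Tendsto (fun t : ℝ => (Real.sqrt t)⁻¹ • y) atTop
          (𝓝 (0 : EuclideanSpace ℝ (Fin N))) := by
        have hs0 : Tendsto Real.sqrt atTop atTop := by
          refine (tendsto_rpow_atTop (show (0:ℝ) < 1/2 by norm_num)).congr' ?_
          exact Eventually.of_forall fun x => (Real.sqrt_eq_rpow x).symm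
        have hs : Tendsto (fun t : ℝ => (Real.sqrt t)⁻¹) atTop (𝓝 0) :=
          hs0.inv_tendsto_atTop
        have := hs.smul_const y
        simpa using this
      have h2 := (tendsto_translate N).comp h1
      have h3 : Tendsto (fun t : ℝ =>
          ∫ x, |heatKernel N (x - y) t - heatKernel N x t|) atTop (𝓝 0) := by
        refine h2.congr' ?_
        filter_upwards [eventually_gt_atTop (0:ℝ)] with t ht
        exact (phi_eq N ht y).symm
      have := h3.mul_const |u₀ y|
      simpa using this
  -- Step A : squeeze
  refine tendsto_of_tendsto_of_tendsto_of_le_of_le' tendsto_const_nhds hB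
    (Eventually.of_forall fun t => integral_nonneg fun x => abs_nonneg _) ?_
  filter_upwards [eventually_gt_atTop (0:ℝ)] with t ht
  have hGt := hk_integrable N ht
  have hk1 : Integrable (fun p : EuclideanSpace ℝ (Fin N) × EuclideanSpace ℝ (Fin N) =>
      heatKernel N (p.1 - p.2) t * u₀ p.2) (volume.prod volume) := by
    have h := hu₀.convolution_integrand (ContinuousLinearMap.mul ℝ ℝ) hGt
    simp only [ContinuousLinearMap.mul_apply'] at h
    exact h.congr (Eventually.of_forall fun p => mul_comm _ _)
  have hk2 : Integrable (fun p : EuclideanSpace ℝ (Fin N) × EuclideanSpace ℝ (Fin N) =>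
      heatKernel N p.1 t * u₀ p.2) (volume.prod volume) := hGt.mul_prod hu₀
  have hk := hk1.sub hk2
  have hkn : Integrable (fun p : EuclideanSpace ℝ (Fin N) × EuclideanSpace ℝ (Fin N) =>
      |heatKernel N (p.1 - p.2) t * u₀ p.2 - heatKernel N p.1 t * u₀ p.2|)
      (volume.prod volume) := by
    simpa [Real.norm_eq_abs] using hk.norm
  have hae : ∀ᵐ x : EuclideanSpace ℝ (Fin N),
      (∫ y, heatKernel N (x - y) t * u₀ y) - M * heatKernel N x t
        = ∫ y, (heatKernel N (x - y) t * u₀ y - heatKernel N x t * u₀ y) := by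
    filter_upwards [hk1.prod_right_ae] with x hx1
    have hx2 : Integrable (fun y => heatKernel N x t * u₀ y) := hu₀.const_mul _
    rw [integral_sub hx1 hx2, integral_const_mul, hM]
    ring
  calc ∫ x, |(∫ y, heatKernel N (x - y) t * u₀ y) - M * heatKernel N x t|
      ≤ ∫ x, ∫ y, |heatKernel N (x - y) t * u₀ y - heatKernel N x t * u₀ y| := by
        refine integral_mono_of_nonneg (Eventually.of_forall fun x => abs_nonneg _)
          ?_ ?_
        · have := hk.norm.integral_norm_prod_left
          simpa [Real.norm_eq_abs] using hk.integral_norm_prod_left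
        · filter_upwards [hae] with x hx
          rw [hx]
          simpa [Real.norm_eq_abs] using
            norm_integral_le_integral_norm
              (fun y => heatKernel N (x - y) t * u₀ y - heatKernel N x t * u₀ y)
    _ = ∫ y, ∫ x, |heatKernel N (x - y) t * u₀ y - heatKernel N x t * u₀ y| := by
        apply integral_integral_swap
        apply hkn
    _ = B t := by
        rw [hBdef]
        refine integral_congr_ae (Eventually.of_forall fun y => ?_)
        simp_rw [← sub_mul, abs_mul]
        rw [integral_mul_const]
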